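/- For every integer N ≥ 1, the polynomial p(z) = 1 + z + z² + ... + z^{N-1} + 2z^N has all its zeros in the open unit disk (i.e., p is Schur stable). -/

import Mathlib

open Polynomial

theorem schur_stable_bini (N : ℕ) (hN : 1 ≤ N) :
    ∀ z : ℂ, ((∑ i ∈ Finset.range N, (X : ℂ[X]) ^ i) + C 2 * X ^ N).IsRoot z →
      ‖z‖ < 1 := by
  intro z hz
  have h : (∑ i ∈ Finset.range N, z ^ i) + 2 * z ^ N = 0 := by
    simpa [IsRoot, eval_finset_sum] using hz
  by_cases hz1 : z = 1
  · subst hz1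
    simp at h
    have : ((N : ℂ) + 2).re = 0 := by rw [h]; simp
    simp [Complex.add_re] at this
    have : (0:ℝ) < (N:ℝ) + 2 := by positivity
    linarith
  · have hg := geom_sum_mul z N
    have key : 2 * z ^ (N + 1) = z ^ N + 1 := by
      linear_combination (z - 1) * h - hg
    by_contra hc
    push_neg at hc
    have hr1 : 1 ≤ ‖z‖ := hc
    have habs : 2 * ‖z‖ ^ (N + 1) = ‖z ^ N + 1‖ := by
      rw [← key]; simp [map_mul, map_pow]
    have hle : ‖z ^ N + 1‖ ≤ ‖z‖ ^ N + 1 := by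
      calc ‖z ^ N + 1‖ ≤ ‖z ^ N‖ + ‖(1:ℂ)‖ :=
            norm_add_le _ _
        _ = ‖z‖ ^ N + 1 := by simp [map_pow]
    have h1 : ‖z‖ ^ N ≤ ‖z‖ ^ (N + 1) :=
      pow_le_pow_right₀ hr1 (Nat.le_succ N)
    have h2 : (1:ℝ) ≤ ‖z‖ ^ (N + 1) := one_le_pow₀ hr1
    have heq2 : ‖z‖ ^ (N + 1) = 1 := by nlinarith [habs, hle]
    have habsN : ‖z ^ N‖ = 1 := by
      rw [norm_pow]; nlinarith [habs, hle]
    have habsS : ‖z ^ N + 1‖ = 2 := by rw [← habs, heq2]; ring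
    have hnsq : Complex.normSq (z ^ N + 1) = 4 := by
      rw [← Complex.sq_norm, habsS]; norm_num
    have hnsqw : Complex.normSq (z ^ N) = 1 := by
      rw [← Complex.sq_norm, habsN]; norm_num
    have hre : (z ^ N).re = 1 := by
      have e1 : Complex.normSq (z ^ N + 1)
          = Complex.normSq (z ^ N) + 2 * (z ^ N).re + 1 := by
        simp [Complex.normSq_apply, Complex.add_re, Complex.add_im]; ring
      rw [hnsq, hnsqw] at e1; linarith
    have him : (z ^ N).im = 0 := by
      have : (z ^ N).re ^ 2 + (z ^ N).im ^ 2 = 1 := by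
        rw [← hnsqw]; simp [Complex.normSq_apply]; ring
      nlinarith [sq_nonneg (z ^ N).im]
    have hwone : z ^ N = 1 := by
      apply Complex.ext <;> simp [hre, him]
    have hz11 : z ^ (N + 1) = 1 := by
      have h4 := key
      rw [hwone] at h4
      linear_combination h4 / 2
    exact hz1 (by
      have h3 : z * z ^ N = 1 := by rw [← pow_succ']; exact hz11
      rw [hwone, mul_one] at h3
      exact h3)
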